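/- For the Benjamini–Hochberg step-up test with critical values iα/m under arbitrary dependence of uniform-[0,1] true-null p-values, FDR ≤ min(α·Σ_{k=1}^m 1/k, 1); equivalently, the step-up test with critical values α_i = iα'/(Σ_{k=1}^m m/k) has FDR ≤ α' under arbitrary dependence. -/

import Mathlib

open MeasureTheory ProbabilityTheory Finset
open scoped Classical
noncomputable section

/-- `#{i : p i ≤ t}`, i.e. `m·F̂_m(t)`. -/
def countLE {m : ℕ} (p : Fin m → ℝ) (t : ℝ) : ℕ :=
  (Finset.univ.filter (fun i => p i ≤ t)).card

/-- The `i`-th order statistic `p_{i:m}` (for `1 ≤ i ≤ m`), characterized by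
`p_{i:m} ≤ t ↔ i ≤ #{k : p k ≤ t}`. -/
def orderStat {m : ℕ} (p : Fin m → ℝ) (i : ℕ) : ℝ :=
  sInf {t | i ≤ countLE p t}

/-- Step-up rejection number `R = max {j : p_{j:m} ≤ α_j}` (`max ∅ = 0`). -/
def suR {m : ℕ} (α : ℕ → ℝ) (p : Fin m → ℝ) : ℕ :=
  (((Finset.range (m+1)).filter (fun j => 1 ≤ j ∧ orderStat p j ≤ α j)).max).unbotD 0

/-- Step-down rejection number `R = max {j : p_{i:m} ≤ α_i for all i ≤ j}`. -/
def sdR {m : ℕ} (α : ℕ → ℝ) (p : Fin m → ℝ) : ℕ :=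
  (((Finset.range (m+1)).filter
    (fun j => ∀ i ∈ Finset.Icc 1 j, orderStat p i ≤ α i)).max).unbotD 0

/-- FDR `= E[V / max(R,1)]` for rejection number `R` and rejection rule `rej`. -/
def FDR {Ω : Type*} [MeasurableSpace Ω] (μ : Measure Ω) {m : ℕ}
    (p : Ω → Fin m → ℝ) (I0 : Finset (Fin m))
    (R : (Fin m → ℝ) → ℕ) (rej : (Fin m → ℝ) → Fin m → Prop) : ℝ :=
  ∫ ω, ((I0.filter (fun i => rej (p ω) i)).card : ℝ) / (max (R (p ω)) 1 : ℕ) ∂μ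

/-- FDR of the step-up test with critical values `α`. -/
def suFDR {Ω : Type*} [MeasurableSpace Ω] (μ : Measure Ω) {m : ℕ}
    (α : ℕ → ℝ) (p : Ω → Fin m → ℝ) (I0 : Finset (Fin m)) : ℝ :=
  FDR μ p I0 (suR α) (fun q i => q i ≤ α (suR α q))

/-- FDR of the step-down test with critical values `α`
(rejecting the hypotheses belonging to `p_{i:m}`, `i ≤ R`). -/
def sdFDR {Ω : Type*} [MeasurableSpace Ω] (μ : Measure Ω) {m : ℕ}
    (α : ℕ → ℝ) (p : Ω → Fin m → ℝ) (I0 : Finset (Fin m)) : ℝ :=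
  FDR μ p I0 (sdR α) (fun q i => 1 ≤ sdR α q ∧ q i ≤ orderStat q (sdR α q))

/-- Benjamini–Hochberg critical values `b_j = jα/m`. -/
def bh (m : ℕ) (α : ℝ) (j : ℕ) : ℝ := j * α / m

/-- The uniform distribution on `[0,1]`. -/
def unif01 : Measure ℝ := volume.restrict (Set.Icc 0 1)

lemma countLE_mono {m : ℕ} (p : Fin m → ℝ) : Monotone (countLE p) := by
  intro s t hst
  apply Finset.card_le_card
  intro i hi
  simp only [Finset.mem_filter] at *
  exact ⟨hi.1, hi.2.trans hst⟩

lemma countLE_le {m : ℕ} (p : Fin m → ℝ) (t : ℝ) : countLE p t ≤ m := by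
  have := Finset.card_filter_le (Finset.univ : Finset (Fin m)) (fun i => p i ≤ t)
  simpa [countLE] using this

lemma le_countLE_closed {m : ℕ} (p : Fin m → ℝ) (j : ℕ) :
    IsClosed {t | j ≤ countLE p t} := by
  have heq : {t | j ≤ countLE p t} =
      ⋃ s ∈ (Finset.univ.powersetCard j : Finset (Finset (Fin m))),
        ⋂ i ∈ (s : Finset (Fin m)), Set.Ici (p i) := by
    ext t
    simp only [Set.mem_setOf_eq, Set.mem_iUnion, Set.mem_iInter, Set.mem_Ici,
      Finset.mem_powersetCard, exists_prop]
    constructor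
    · intro h
      obtain ⟨s, hs, hcard⟩ := Finset.exists_subset_card_eq h
      exact ⟨s, ⟨(hs.trans (Finset.filter_subset _ _)), hcard⟩,
        fun i hi => (Finset.mem_filter.mp (hs hi)).2⟩
    · rintro ⟨s, ⟨-, hcard⟩, h⟩
      calc j = s.card := hcard.symm
      _ ≤ countLE p t := Finset.card_le_card (fun i hi =>
          Finset.mem_filter.mpr ⟨Finset.mem_univ i, h i hi⟩)
  rw [heq]
  exact Set.Finite.isClosed_biUnion (Finset.finite_toSet _)
    (fun s _ => isClosed_biInter (fun i _ => isClosed_Ici))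

lemma orderStat_le_iff {m : ℕ} (hm : 1 ≤ m) (p : Fin m → ℝ) {j : ℕ}
    (hj1 : 1 ≤ j) (hjm : j ≤ m) (t : ℝ) :
    orderStat p j ≤ t ↔ j ≤ countLE p t := by
  have hu : (Finset.univ : Finset (Fin m)).Nonempty := by
    simpa [Finset.univ_nonempty_iff, ← Fin.pos_iff_nonempty] using (show 0 < m by omega)
  have hne : Set.Nonempty {t | j ≤ countLE p t} := by
    refine ⟨Finset.univ.sup' hu p, ?_⟩
    have : (Finset.univ.filter (fun i => p i ≤ Finset.univ.sup' hu p)) = Finset.univ := by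
      apply Finset.filter_true_of_mem
      intro i _
      exact Finset.le_sup' p (Finset.mem_univ i)
    simp only [Set.mem_setOf_eq, countLE, this, Finset.card_univ, Fintype.card_fin]
    exact hjm
  have hbdd : BddBelow {t | j ≤ countLE p t} := by
    refine ⟨Finset.univ.inf' hu p, ?_⟩
    intro s hs
    have h1 : 1 ≤ countLE p s := le_trans hj1 hs
    have : (Finset.univ.filter (fun i => p i ≤ s)).Nonempty := by
      rw [← Finset.card_pos]; exact h1
    obtain ⟨i, hi⟩ := this
    exact le_trans (Finset.inf'_le p (Finset.mem_univ i)) (Finset.mem_filter.mp hi).2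
  have hmem := (le_countLE_closed p j).csInf_mem hne hbdd
  constructor
  · intro h
    exact le_trans hmem (countLE_mono p h)
  · intro h
    exact csInf_le hbdd h

lemma suR_le {m : ℕ} (α : ℕ → ℝ) (p : Fin m → ℝ) : suR α p ≤ m := by
  unfold suR
  rcases h : ((Finset.range (m+1)).filter (fun j => 1 ≤ j ∧ orderStat p j ≤ α j)).max with _ | n
  · exact Nat.zero_le m
  · have hn := Finset.mem_of_max h
    have := Finset.mem_range.mp (Finset.mem_filter.mp hn).1
    exact Nat.lt_succ_iff.mp this

lemma le_suR {m : ℕ} (α : ℕ → ℝ) (p : Fin m → ℝ) {j : ℕ}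
    (hj1 : 1 ≤ j) (hjm : j ≤ m) (h : orderStat p j ≤ α j) : j ≤ suR α p := by
  have hmem : j ∈ (Finset.range (m+1)).filter (fun j => 1 ≤ j ∧ orderStat p j ≤ α j) :=
    Finset.mem_filter.mpr ⟨Finset.mem_range.mpr (Nat.lt_succ_of_le hjm), hj1, h⟩
  have hle := Finset.le_max hmem
  unfold suR
  rcases hmax : ((Finset.range (m+1)).filter (fun j => 1 ≤ j ∧ orderStat p j ≤ α j)).max with _ | n
  · rw [hmax] at hle; exact absurd hle (WithBot.not_coe_le_bot _)
  · rw [hmax] at hle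
    exact (WithBot.coe_le_coe.mp hle)

lemma suR_spec {m : ℕ} (α : ℕ → ℝ) (p : Fin m → ℝ) (h1 : 1 ≤ suR α p) :
    orderStat p (suR α p) ≤ α (suR α p) := by
  unfold suR at h1 ⊢
  rcases hmax : ((Finset.range (m+1)).filter (fun j => 1 ≤ j ∧ orderStat p j ≤ α j)).max with _ | n
  · rw [hmax] at h1; exact (Nat.not_succ_le_zero 0 h1).elim
  · have hn := Finset.mem_of_max hmax
    have := (Finset.mem_filter.mp hn).2.2
    exact this

lemma bh_mono (m : ℕ) {β : ℝ} (hβ : 0 ≤ β) : Monotone (bh m β) := by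
  intro a b hab
  unfold bh
  have h : (a:ℝ) ≤ b := Nat.cast_le.mpr hab
  gcongr

lemma bh_zero (m : ℕ) (β : ℝ) : bh m β 0 = 0 := by simp [bh]

lemma telescope_sum (u : ℕ → ℝ) (r : ℕ) :
    ∑ k ∈ Finset.Icc 1 r, (u k - u (k-1)) = u r - u 0 := by
  induction r with
  | zero => simp
  | succ n ih =>
      rw [Finset.sum_Icc_succ_top (by omega), ih]
      simp

lemma shift_sum (f : ℕ → ℝ) (n : ℕ) :
    ∑ k ∈ Finset.Icc 1 (n+1), f k = f 1 + ∑ k ∈ Finset.Icc 1 n, f (k+1) := by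
  induction n with
  | zero => simp
  | succ n ih =>
      rw [Finset.sum_Icc_succ_top (by omega), ih, Finset.sum_Icc_succ_top (by omega)]
      ring

lemma abel_sum (G : ℕ → ℝ) (hG0 : G 0 = 0) (n : ℕ) :
    ∑ k ∈ Finset.Icc 1 (n+1), (G k - G (k-1)) / k
      = G (n+1) / (n+1) + ∑ k ∈ Finset.Icc 1 n, G k / (k*(k+1)) := by
  induction n with
  | zero => simp [hG0]
  | succ n ih =>
      rw [Finset.sum_Icc_succ_top (by omega), ih, Finset.sum_Icc_succ_top (by omega)]
      have h1 : ((n:ℝ)+1) ≠ 0 := by positivity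
      have h2 : ((n:ℝ)+2) ≠ 0 := by positivity
      push_cast
      field_simp
      ring

lemma countLE_suR_le {m : ℕ} (hm : 1 ≤ m) {β : ℝ} (hβ : 0 ≤ β) (q : Fin m → ℝ) :
    countLE q (bh m β (suR (bh m β) q)) ≤ max (suR (bh m β) q) 1 := by
  set α := bh m β with hα
  set r := suR α q with hr
  rcases Nat.eq_zero_or_pos r with h0 | h1
  · rw [h0]
    by_contra hcon
    push_neg at hcon
    have h1le : 1 ≤ countLE q (α 0) := by omega
    have h2 : 1 ≤ countLE q (α 1) :=
      le_trans h1le (countLE_mono q (bh_mono m hβ (Nat.zero_le 1)))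
    have h3 : orderStat q 1 ≤ α 1 := (orderStat_le_iff hm q le_rfl hm (α 1)).mpr h2
    have h4 : 1 ≤ r := le_suR α q le_rfl hm h3
    omega
  · by_contra hcon
    push_neg at hcon
    have hrc : r < countLE q (α r) := by omega
    have hcm : countLE q (α r) ≤ m := countLE_le q _
    have h1c : 1 ≤ countLE q (α r) := by omega
    have hoc : orderStat q (countLE q (α r)) ≤ α (countLE q (α r)) := by
      rw [orderStat_le_iff hm q h1c hcm]
      exact countLE_mono q (bh_mono m hβ hrc.le)
    have := le_suR α q h1c hcm hoc
    omega

lemma pointwise_bound {m : ℕ} (hm : 1 ≤ m) {β : ℝ} (hβ : 0 ≤ β) (q : Fin m → ℝ) (x : ℝ) :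
    (if x ≤ bh m β (suR (bh m β) q) then (1:ℝ) else 0) / ((max (suR (bh m β) q) 1 : ℕ) : ℝ) ≤
      (if x ≤ 0 then (1:ℝ) else 0)
        + ∑ k ∈ Finset.Icc 1 m, ((if x ≤ bh m β k then (1:ℝ) else 0)
            - (if x ≤ bh m β (k-1) then (1:ℝ) else 0)) / k := by
  set α := bh m β with hα
  set r := suR α q with hr
  have hrm : r ≤ m := suR_le α q
  have hd : ∀ k, 0 ≤ ((if x ≤ α k then (1:ℝ) else 0) - (if x ≤ α (k-1) then (1:ℝ) else 0)) := by
    intro k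
    have hmono : α (k-1) ≤ α k := bh_mono m hβ (Nat.sub_le k 1)
    by_cases h1 : x ≤ α (k-1)
    · rw [if_pos h1, if_pos (h1.trans hmono)]; norm_num
    · rw [if_neg h1]
      split_ifs <;> norm_num
  have hdk : ∀ k ∈ Finset.Icc 1 m,
      0 ≤ ((if x ≤ α k then (1:ℝ) else 0) - (if x ≤ α (k-1) then (1:ℝ) else 0)) / k := by
    intro k hk
    exact div_nonneg (hd k) (Nat.cast_nonneg k)
  have hD1 : (1:ℝ) ≤ ((max r 1 : ℕ):ℝ) := by exact_mod_cast le_max_right r 1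
  have hsum0 : 0 ≤ ∑ k ∈ Finset.Icc 1 m, ((if x ≤ α k then (1:ℝ) else 0)
      - (if x ≤ α (k-1) then (1:ℝ) else 0)) / k := Finset.sum_nonneg hdk
  by_cases hx0 : x ≤ 0
  · rw [if_pos hx0]
    have hL : (if x ≤ α r then (1:ℝ) else 0) / ((max r 1 : ℕ):ℝ) ≤ 1 := by
      apply div_le_one_of_le₀
      · split_ifs <;> linarith
      · linarith
    linarith
  · push_neg at hx0
    rw [if_neg (not_le.mpr hx0)]
    by_cases hxr : x ≤ α r
    · have hr1 : 1 ≤ r := by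
        by_contra h
        push_neg at h
        have : r = 0 := by omega
        rw [this] at hxr
        have : α 0 = 0 := bh_zero m β
        linarith [hxr.trans_eq this]
      have hmax : max r 1 = r := max_eq_left hr1
      rw [if_pos hxr, hmax]
      have hrpos : (0:ℝ) < r := by exact_mod_cast hr1
      have h2 : ∑ k ∈ Finset.Icc 1 r, ((if x ≤ α k then (1:ℝ) else 0)
          - (if x ≤ α (k-1) then (1:ℝ) else 0)) / r
          ≤ ∑ k ∈ Finset.Icc 1 r, ((if x ≤ α k then (1:ℝ) else 0)
          - (if x ≤ α (k-1) then (1:ℝ) else 0)) / k := by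
        apply Finset.sum_le_sum
        intro k hk
        obtain ⟨hk1, hkr⟩ := Finset.mem_Icc.mp hk
        have hkpos : (0:ℝ) < k := by exact_mod_cast hk1
        have hkr' : (k:ℝ) ≤ r := by exact_mod_cast hkr
        exact div_le_div_of_nonneg_left (hd k) hkpos hkr'
      have h3 : ∑ k ∈ Finset.Icc 1 r, ((if x ≤ α k then (1:ℝ) else 0)
          - (if x ≤ α (k-1) then (1:ℝ) else 0)) / (r:ℝ) = 1 / r := by
        rw [← Finset.sum_div, telescope_sum (fun k => if x ≤ α k then (1:ℝ) else 0) r]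
        rw [if_pos hxr, if_neg (by rw [hα, bh_zero m β]; exact not_le.mpr hx0)]
        norm_num
      have h4 : ∑ k ∈ Finset.Icc 1 r, ((if x ≤ α k then (1:ℝ) else 0)
          - (if x ≤ α (k-1) then (1:ℝ) else 0)) / k
          ≤ ∑ k ∈ Finset.Icc 1 m, ((if x ≤ α k then (1:ℝ) else 0)
          - (if x ≤ α (k-1) then (1:ℝ) else 0)) / k :=
        Finset.sum_le_sum_of_subset_of_nonneg (Finset.Icc_subset_Icc_right hrm)
          (fun k hk _ => hdk k hk)
      linarith
    · rw [if_neg hxr]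
      simp only [zero_div, zero_add]
      exact hsum0

lemma indicator_integral {Ω : Type*} [MeasurableSpace Ω] (μ : Measure Ω) [IsProbabilityMeasure μ]
    (f : Ω → ℝ) (hf : Measurable f) (t : ℝ) :
    Integrable (fun ω => if f ω ≤ t then (1:ℝ) else 0) μ ∧
    ∫ ω, (if f ω ≤ t then (1:ℝ) else 0) ∂μ = (μ {ω | f ω ≤ t}).toReal := by
  have hS : MeasurableSet {ω | f ω ≤ t} := hf measurableSet_Iic
  have heq : (fun ω => if f ω ≤ t then (1:ℝ) else 0)
      = Set.indicator {ω | f ω ≤ t} (fun _ => (1:ℝ)) := by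
    funext ω
    by_cases h : f ω ≤ t <;> simp [Set.indicator_apply, h]
  constructor
  · rw [heq]; exact (integrable_const 1).indicator hS
  · rw [heq, integral_indicator_const (1:ℝ) hS]; simp [measureReal_def]

lemma bh_suFDR_le_one {Ω : Type*} [MeasurableSpace Ω] (μ : Measure Ω) [IsProbabilityMeasure μ]
    {m : ℕ} (hm : 1 ≤ m) {β : ℝ} (hβ0 : 0 ≤ β)
    (I0 : Finset (Fin m)) (p : Ω → Fin m → ℝ) :
    suFDR μ (bh m β) p I0 ≤ 1 := by
  unfold suFDR FDR
  have : ∫ ω, (1:ℝ) ∂μ = 1 := by simp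
  rw [← this]
  apply integral_mono_of_nonneg
  · exact ae_of_all _ (fun ω => div_nonneg (Nat.cast_nonneg _) (Nat.cast_nonneg _))
  · exact integrable_const 1
  · apply ae_of_all
    intro ω
    set α := bh m β
    set q := p ω
    have hV : (I0.filter (fun i => q i ≤ α (suR α q))).card ≤ max (suR α q) 1 := by
      calc (I0.filter (fun i => q i ≤ α (suR α q))).card
          ≤ (Finset.univ.filter (fun i => q i ≤ α (suR α q))).card :=
            Finset.card_le_card (Finset.filter_subset_filter _ (Finset.subset_univ I0))
        _ = countLE q (α (suR α q)) := rfl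
        _ ≤ max (suR α q) 1 := countLE_suR_le hm hβ0 q
    have hD : (1:ℝ) ≤ ((max (suR α q) 1 : ℕ):ℝ) := by exact_mod_cast le_max_right _ 1
    apply div_le_one_of_le₀ _ (by linarith)
    calc ((I0.filter (fun i => q i ≤ α (suR α q))).card : ℝ)
        ≤ ((max (suR α q) 1 : ℕ):ℝ) := by exact_mod_cast hV
      _ ≤ _ := le_refl _

lemma bh_suFDR_le {Ω : Type*} [MeasurableSpace Ω] (μ : Measure Ω) [IsProbabilityMeasure μ]
    {m : ℕ} (hm : 1 ≤ m) {β : ℝ} (hβ0 : 0 ≤ β) (hβ1 : β ≤ 1)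
    (I0 : Finset (Fin m)) (p : Ω → Fin m → ℝ)
    (hmeas : ∀ i, Measurable (fun ω => p ω i))
    (hstoch : ∀ i ∈ I0, ∀ x ∈ Set.Icc (0:ℝ) 1, μ {ω | p ω i ≤ x} ≤ ENNReal.ofReal x) :
    suFDR μ (bh m β) p I0 ≤ β * ∑ k ∈ Finset.Icc 1 m, (1:ℝ)/k := by
  set α := bh m β with hα
  have hm0 : (0:ℝ) < m := by exact_mod_cast hm
  have hIind : ∀ (i : Fin m) (t : ℝ), Integrable (fun ω => if p ω i ≤ t then (1:ℝ) else 0) μ :=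
    fun i t => (indicator_integral μ _ (hmeas i) t).1
  have hIint : ∀ (i : Fin m) (t : ℝ),
      ∫ ω, (if p ω i ≤ t then (1:ℝ) else 0) ∂μ = (μ {ω | p ω i ≤ t}).toReal :=
    fun i t => (indicator_integral μ _ (hmeas i) t).2
  set g : Ω → ℝ := fun ω => ∑ i ∈ I0, ((if p ω i ≤ 0 then (1:ℝ) else 0)
    + ∑ k ∈ Finset.Icc 1 m, ((if p ω i ≤ α k then (1:ℝ) else 0)
        - (if p ω i ≤ α (k-1) then (1:ℝ) else 0)) / k) with hg
  have hsummand : ∀ i : Fin m, Integrable (fun ω => (if p ω i ≤ 0 then (1:ℝ) else 0)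
      + ∑ k ∈ Finset.Icc 1 m, ((if p ω i ≤ α k then (1:ℝ) else 0)
          - (if p ω i ≤ α (k-1) then (1:ℝ) else 0)) / k) μ := by
    intro i
    apply (hIind i 0).add
    apply integrable_finset_sum
    intro k _
    exact ((hIind i (α k)).sub (hIind i (α (k-1)))).div_const _
  have hgInt : Integrable g μ := by
    rw [hg]
    exact integrable_finset_sum _ (fun i _ => hsummand i)
  have h1 : suFDR μ α p I0 ≤ ∫ ω, g ω ∂μ := by
    unfold suFDR FDR
    apply integral_mono_of_nonneg
    · exact ae_of_all _ (fun ω => div_nonneg (Nat.cast_nonneg _) (Nat.cast_nonneg _))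
    · exact hgInt
    · apply ae_of_all
      intro ω
      show ((I0.filter (fun i => p ω i ≤ α (suR α (p ω)))).card : ℝ)
          / ((max (suR α (p ω)) 1 : ℕ):ℝ) ≤ g ω
      rw [Finset.card_filter]
      push_cast
      rw [Finset.sum_div]
      apply Finset.sum_le_sum
      intro i _
      simpa using pointwise_bound hm hβ0 (p ω) (p ω i)
  have h2 : ∫ ω, g ω ∂μ = ∑ i ∈ I0, ((μ {ω | p ω i ≤ 0}).toReal
      + ∑ k ∈ Finset.Icc 1 m, ((μ {ω | p ω i ≤ α k}).toReal
          - (μ {ω | p ω i ≤ α (k-1)}).toReal) / k) := by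
    rw [hg, integral_finset_sum _ (fun i _ => hsummand i)]
    apply Finset.sum_congr rfl
    intro i _
    have hB : ∀ k : ℕ, Integrable (fun ω => ((if p ω i ≤ α k then (1:ℝ) else 0)
        - (if p ω i ≤ α (k-1) then (1:ℝ) else 0)) / k) μ :=
      fun k => by exact ((hIind i (α k)).sub (hIind i (α (k-1)))).div_const _
    have hC : Integrable (fun ω => ∑ k ∈ Finset.Icc 1 m,
        ((if p ω i ≤ α k then (1:ℝ) else 0)
        - (if p ω i ≤ α (k-1) then (1:ℝ) else 0)) / k) μ :=
      integrable_finset_sum _ (fun k _ => hB k)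
    rw [integral_add (hIind i 0) hC, hIint i 0]
    congr 1
    rw [integral_finset_sum _ (fun k _ => hB k)]
    apply Finset.sum_congr rfl
    intro k _
    rw [integral_div, integral_sub (hIind i (α k)) (hIind i (α (k-1))), hIint, hIint]
  have h3 : ∀ i ∈ I0, (μ {ω | p ω i ≤ 0}).toReal
      + ∑ k ∈ Finset.Icc 1 m, ((μ {ω | p ω i ≤ α k}).toReal
          - (μ {ω | p ω i ≤ α (k-1)}).toReal) / k
      ≤ β / m * ∑ k ∈ Finset.Icc 1 m, (1:ℝ)/k := by
    intro i hi
    set G : ℕ → ℝ := fun k => (μ {ω | p ω i ≤ α k}).toReal with hG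
    have hG0 : G 0 = 0 := by
      have h := hstoch i hi 0 ⟨le_rfl, zero_le_one⟩
      rw [ENNReal.ofReal_zero, nonpos_iff_eq_zero] at h
      have : α 0 = 0 := bh_zero m β
      simp only [hG, this, h, ENNReal.toReal_zero]
    have hGle : ∀ k, k ≤ m → G k ≤ k * β / m := by
      intro k hk
      have hαk0 : 0 ≤ α k := by
        rw [hα]; unfold bh; positivity
      have hαk1 : α k ≤ 1 := by
        rw [hα]; unfold bh
        rw [div_le_one hm0]
        calc (k:ℝ) * β ≤ k * 1 := by nlinarith [Nat.cast_nonneg (α := ℝ) k]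
          _ = k := by ring
          _ ≤ m := by exact_mod_cast hk
      have h := hstoch i hi (α k) ⟨hαk0, hαk1⟩
      have := ENNReal.toReal_le_of_le_ofReal hαk0 h
      calc G k ≤ α k := this
        _ = k * β / m := by simp [hα, bh]
    have hfirst : (μ {ω | p ω i ≤ 0}).toReal = 0 := by
      have hset : {ω | p ω i ≤ 0} = {ω | p ω i ≤ α 0} := by simp [hα, bh]
      rw [hset]; exact hG0
    obtain ⟨n, rfl⟩ : ∃ n, m = n + 1 := ⟨m - 1, by omega⟩
    rw [hfirst, zero_add]
    have habel := abel_sum G hG0 n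
    push_cast at hGle ⊢
    calc ∑ k ∈ Finset.Icc 1 (n+1), (G k - G (k-1)) / k
        = G (n+1) / (n+1) + ∑ k ∈ Finset.Icc 1 n, G k / (k*(k+1)) := habel
      _ ≤ β/((n:ℝ)+1) * 1 + ∑ k ∈ Finset.Icc 1 n, β/((n:ℝ)+1) * (1/((k:ℝ)+1)) := by
          apply add_le_add
          · have hh := hGle (n+1) le_rfl
            have hn1 : (0:ℝ) < (n:ℝ)+1 := by positivity
            rw [mul_one]
            calc G (n+1) / ((n:ℝ)+1) ≤ (((n:ℝ)+1) * β / ((n:ℝ)+1)) / ((n:ℝ)+1) := by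
                  gcongr
                  exact_mod_cast hh
              _ = β / ((n:ℝ)+1) := by field_simp
          · apply Finset.sum_le_sum
            intro k hk
            obtain ⟨hk1, hkn⟩ := Finset.mem_Icc.mp hk
            have hkpos : (0:ℝ) < k := by exact_mod_cast hk1
            have hGk : G k ≤ (k:ℝ) * β / ((n:ℝ)+1) := by
              have := hGle k (by omega)
              exact_mod_cast this
            have hden : (0:ℝ) < (k:ℝ)*((k:ℝ)+1) := by positivity
            calc G k / ((k:ℝ)*((k:ℝ)+1)) ≤ ((k:ℝ) * β / ((n:ℝ)+1)) / ((k:ℝ)*((k:ℝ)+1)) := by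
                  gcongr
              _ = β/((n:ℝ)+1) * (1/((k:ℝ)+1)) := by
                  push_cast
                  field_simp
      _ = β/((n:ℝ)+1) * ∑ k ∈ Finset.Icc 1 (n+1), (1:ℝ)/(k:ℝ) := by
          rw [shift_sum (fun k => (1:ℝ)/(k:ℝ)) n, mul_add, Finset.mul_sum]
          push_cast
          norm_num
  have H0 : 0 ≤ ∑ k ∈ Finset.Icc 1 m, (1:ℝ)/k :=
    Finset.sum_nonneg (fun k _ => by positivity)
  have hcard : (I0.card : ℝ) ≤ (m:ℝ) := by
    have h := Finset.card_le_univ I0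
    simp only [Finset.card_univ, Fintype.card_fin] at h
    exact_mod_cast h
  have h4 : ∑ i ∈ I0, ((μ {ω | p ω i ≤ 0}).toReal
      + ∑ k ∈ Finset.Icc 1 m, ((μ {ω | p ω i ≤ α k}).toReal
          - (μ {ω | p ω i ≤ α (k-1)}).toReal) / k)
      ≤ (I0.card : ℝ) * (β / m * ∑ k ∈ Finset.Icc 1 m, (1:ℝ)/k) := by
    calc _ ≤ ∑ _i ∈ I0, (β / m * ∑ k ∈ Finset.Icc 1 m, (1:ℝ)/k) := Finset.sum_le_sum h3
      _ = (I0.card : ℝ) * (β / m * ∑ k ∈ Finset.Icc 1 m, (1:ℝ)/k) := by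
          rw [Finset.sum_const, nsmul_eq_mul]
  have h5 : (I0.card : ℝ) * (β / m * ∑ k ∈ Finset.Icc 1 m, (1:ℝ)/k)
      ≤ β * ∑ k ∈ Finset.Icc 1 m, (1:ℝ)/k := by
    have hb : 0 ≤ β / m * ∑ k ∈ Finset.Icc 1 m, (1:ℝ)/k := by positivity
    calc (I0.card : ℝ) * (β / m * ∑ k ∈ Finset.Icc 1 m, (1:ℝ)/k)
        ≤ (m:ℝ) * (β / m * ∑ k ∈ Finset.Icc 1 m, (1:ℝ)/k) :=
          mul_le_mul_of_nonneg_right hcard hb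
      _ = β * ∑ k ∈ Finset.Icc 1 m, (1:ℝ)/k := by
          field_simp
  calc suFDR μ α p I0 ≤ ∫ ω, g ω ∂μ := h1
    _ = _ := h2
    _ ≤ _ := h4
    _ ≤ _ := h5

/-- Benjamini–Yekutieli: under arbitrary dependence of the
p-values (true nulls stochastically larger than uniform), the BH step-up test
satisfies `FDR ≤ min(α·Σ_{k=1}^m 1/k, 1)`; equivalently, the step-up test with
critical values `α_i = iα'/(Σ_{k=1}^m m/k)` has `FDR ≤ α'`. -/
theorem by_dependent_fdr_bound
    {Ω : Type*} [MeasurableSpace Ω] (μ : Measure Ω) [IsProbabilityMeasure μ]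
    (m : ℕ) (hm : 1 ≤ m) (α α' : ℝ)
    (hα : α ∈ Set.Ioo (0:ℝ) 1) (hα' : α' ∈ Set.Ioo (0:ℝ) 1)
    (I0 : Finset (Fin m)) (p : Ω → Fin m → ℝ)
    (hmeas : ∀ i, Measurable (fun ω => p ω i))
    (hrange : ∀ ω i, p ω i ∈ Set.Icc (0:ℝ) 1)
    -- true-null p-values are stochastically larger than uniform; no
    -- independence whatsoever is assumed
    (hstoch : ∀ i ∈ I0, ∀ x ∈ Set.Icc (0:ℝ) 1, μ {ω | p ω i ≤ x} ≤ ENNReal.ofReal x) :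
    suFDR μ (bh m α) p I0 ≤ min (α * ∑ k ∈ Finset.Icc 1 m, (1 : ℝ) / k) 1 ∧
    suFDR μ (fun i => i * α' / (∑ k ∈ Finset.Icc 1 m, (m : ℝ) / k)) p I0 ≤ α' := by
  obtain ⟨hα0, hα1⟩ := hα
  obtain ⟨hα'0, hα'1⟩ := hα'
  have hH1 : (1:ℝ) ≤ ∑ k ∈ Finset.Icc 1 m, (1:ℝ)/k := by
    have h1m : (1:ℕ) ∈ Finset.Icc 1 m := Finset.mem_Icc.mpr ⟨le_rfl, hm⟩
    have := Finset.single_le_sum (f := fun k : ℕ => (1:ℝ)/k)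
      (fun k _ => by positivity) h1m
    simpa using this
  have hHpos : (0:ℝ) < ∑ k ∈ Finset.Icc 1 m, (1:ℝ)/k := lt_of_lt_of_le one_pos hH1
  have hm0 : (m:ℝ) ≠ 0 := by
    have : (0:ℝ) < m := by exact_mod_cast hm
    linarith
  constructor
  · apply le_min
    · exact bh_suFDR_le μ hm hα0.le hα1.le I0 p hmeas hstoch
    · exact bh_suFDR_le_one μ hm hα0.le I0 p
  · have heq : (fun i : ℕ => (i:ℝ) * α' / (∑ k ∈ Finset.Icc 1 m, (m : ℝ) / k))
        = bh m (α' / ∑ k ∈ Finset.Icc 1 m, (1:ℝ)/k) := by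
      funext j
      unfold bh
      have hsum : ∑ k ∈ Finset.Icc 1 m, (m : ℝ) / k
          = m * ∑ k ∈ Finset.Icc 1 m, (1:ℝ)/k := by
        rw [Finset.mul_sum]
        exact Finset.sum_congr rfl (fun k _ => by ring)
      rw [hsum]
      field_simp
    rw [heq]
    have hb0 : 0 ≤ α' / ∑ k ∈ Finset.Icc 1 m, (1:ℝ)/k := by positivity
    have hb1 : α' / ∑ k ∈ Finset.Icc 1 m, (1:ℝ)/k ≤ 1 := by
      rw [div_le_one hHpos]; linarith
    calc suFDR μ (bh m (α' / ∑ k ∈ Finset.Icc 1 m, (1:ℝ)/k)) p I0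
        ≤ (α' / ∑ k ∈ Finset.Icc 1 m, (1:ℝ)/k) * ∑ k ∈ Finset.Icc 1 m, (1:ℝ)/k :=
          bh_suFDR_le μ hm hb0 hb1 I0 p hmeas hstoch
      _ = α' := by field_simp
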